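/- arXiv:1701.03863 — 2 statements merged into one kernel-verified Lean document; each statement's English description precedes it below -/
import Mathlib

section
/- Fix α > 0 and β with α + β > 0, and integers n, p with 1 < p < n. Let A = αI_n + (β/n)·𝟙𝟙ᵀ, let J be a uniformly random subset of {1,…,n} of size p with column selector S = S_J. Then E[S(SᵀAS)⁻¹Sᵀ A] = [p((n−1)α + (p−1)β) / ((n−1)(nα + pβ))] · I_n + [(n−p)pβ / (n(n−1)(nα + pβ))] · 𝟙𝟙ᵀ. -/
open scoped BigOperators Matrix

noncomputable section

/-- The column selector matrix of an index set `J` of size `p`: its columns are the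
standard basis vectors indexed by `J` (in increasing order).  If `J` does not have
cardinality `p` we return the zero matrix (this case never occurs below). -/
def selector {n : ℕ} (p : ℕ) (J : Finset (Fin n)) : Matrix (Fin n) (Fin p) ℝ :=
  if h : J.card = p then
    Matrix.of fun i j => if i = ((J.orderIsoOfFin h j : { x // x ∈ J }) : Fin n) then (1 : ℝ) else 0
  else 0


open Matrix Finset

variable {n p : ℕ}

lemma selector_apply (J : Finset (Fin n)) (h : J.card = p) (i : Fin n) (j : Fin p) :
    selector p J i j
    = if i = ((J.orderIsoOfFin h j : { x // x ∈ J }) : Fin n) then (1 : ℝ) else 0 := by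
  rw [selector, dif_pos h]; rfl

lemma sum_ind (a b : Fin n) :
    ∑ i : Fin n, (if i = a then (1:ℝ) else 0) * (if i = b then 1 else 0)
    = if a = b then 1 else 0 := by
  simp only [ite_mul, one_mul, zero_mul]
  rw [Finset.sum_ite_eq' Finset.univ a (fun i => if i = b then (1:ℝ) else 0)]
  simp

lemma sum_selector_row (J : Finset (Fin n)) (h : J.card = p) (i : Fin n) :
    ∑ j : Fin p, selector p J i j = if i ∈ J then (1:ℝ) else 0 := by
  simp only [selector_apply J h]
  have := Equiv.sum_comp (J.orderIsoOfFin h).toEquiv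
    (fun x : {x // x ∈ J} => if i = (x : Fin n) then (1:ℝ) else 0)
  rw [show (∑ x : Fin p, if i = ((J.orderIsoOfFin h x : { x // x ∈ J }) : Fin n) then (1:ℝ) else 0)
      = ∑ x : {x // x ∈ J}, (if i = (x : Fin n) then (1:ℝ) else 0) from this]
  rw [Finset.sum_coe_sort J (fun x => if i = x then (1:ℝ) else 0)]
  simp [Finset.sum_ite_eq]

lemma selT_mul_self (J : Finset (Fin n)) (h : J.card = p) :
    (selector p J)ᵀ * selector p J = 1 := by
  ext j j'
  simp only [Matrix.mul_apply, Matrix.transpose_apply, selector_apply J h]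
  rw [sum_ind]
  rcases eq_or_ne j j' with rfl | hne
  · simp [Matrix.one_apply]
  · have hne' : ((J.orderIsoOfFin h j : { x // x ∈ J }) : Fin n)
        ≠ ((J.orderIsoOfFin h j' : { x // x ∈ J }) : Fin n) := by
      intro e
      exact hne ((J.orderIsoOfFin h).injective (Subtype.ext e))
    rw [if_neg hne', Matrix.one_apply, if_neg hne]

lemma selT_E_sel (J : Finset (Fin n)) (h : J.card = p) :
    (selector p J)ᵀ * (Matrix.of (fun _ _ => (1:ℝ)) : Matrix (Fin n) (Fin n) ℝ) * selector p J
    = Matrix.of (fun _ _ => (1:ℝ)) := by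
  ext j j'
  simp only [Matrix.mul_apply, Matrix.transpose_apply, Matrix.of_apply, mul_one]
  rw [← Finset.mul_sum]
  have hone : ∀ (j : Fin p), ∑ x : Fin n, selector p J x j = 1 := by
    intro j
    simp only [selector_apply J h]
    rw [Finset.sum_ite_eq' Finset.univ _ (fun _ => (1:ℝ))]
    simp
  rw [hone, hone, one_mul]

lemma sel_mul_selT (J : Finset (Fin n)) (h : J.card = p) :
    selector p J * (selector p J)ᵀ
    = Matrix.of (fun i k => if i = k ∧ i ∈ J then (1:ℝ) else 0) := by
  ext i k
  simp only [Matrix.mul_apply, Matrix.transpose_apply, Matrix.of_apply]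
  rcases eq_or_ne i k with rfl | hne
  · simp only [true_and]
    rw [← sum_selector_row J h i]
    apply Finset.sum_congr rfl
    intro j _
    simp only [selector_apply J h]
    split <;> simp
  · rw [if_neg (fun hc => hne hc.1)]
    apply Finset.sum_eq_zero
    intro j _
    simp only [selector_apply J h]
    by_cases h1 : i = ((J.orderIsoOfFin h j : { x // x ∈ J }) : Fin n)
    · rw [if_pos h1, if_neg (fun h2 => hne (h1.trans h2.symm)), mul_zero]
    · rw [if_neg h1, zero_mul]

lemma sel_E_selT (J : Finset (Fin n)) (h : J.card = p) :
    selector p J * (Matrix.of (fun _ _ => (1:ℝ)) : Matrix (Fin p) (Fin p) ℝ) * (selector p J)ᵀ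
    = Matrix.of (fun i k => (if i ∈ J then (1:ℝ) else 0) * (if k ∈ J then (1:ℝ) else 0)) := by
  ext i k
  simp only [Matrix.mul_apply, Matrix.transpose_apply, Matrix.of_apply, mul_one]
  rw [← Finset.mul_sum, sum_selector_row J h i, sum_selector_row J h k]
variable {p : ℕ}

lemma EE_eq : (Matrix.of (fun _ _ => (1:ℝ)) : Matrix (Fin p) (Fin p) ℝ)
    * Matrix.of (fun _ _ => (1:ℝ)) = (p:ℝ) • Matrix.of (fun _ _ => (1:ℝ)) := by
  ext i k
  simp [Matrix.mul_apply]

lemma inv_combo (α c x y : ℝ) (h1 : α * x = 1) (h2 : α * y + c * x + (p:ℝ) * (c * y) = 0) :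
    (α • (1 : Matrix (Fin p) (Fin p) ℝ) + c • Matrix.of (fun _ _ => (1:ℝ)))⁻¹
    = x • 1 + y • Matrix.of (fun _ _ => (1:ℝ)) := by
  apply Matrix.inv_eq_right_inv
  have expand : (α • (1 : Matrix (Fin p) (Fin p) ℝ) + c • Matrix.of (fun _ _ => (1:ℝ)))
      * (x • 1 + y • Matrix.of (fun _ _ => (1:ℝ)))
      = (α * x) • (1 : Matrix (Fin p) (Fin p) ℝ)
        + (α * y + c * x + (p:ℝ) * (c * y)) • Matrix.of (fun _ _ => (1:ℝ)) := by
    simp only [Matrix.add_mul, Matrix.mul_add, smul_mul_assoc, mul_smul_comm,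
      Matrix.one_mul, Matrix.mul_one, EE_eq, smul_smul]
    module
  rw [expand, h1, h2, one_smul, zero_smul, add_zero]

variable {n : ℕ}

lemma sum_mem_ind (J : Finset (Fin n)) (h : J.card = p) :
    ∑ m : Fin n, (if m ∈ J then (1:ℝ) else 0) = (p:ℝ) := by
  rw [Finset.sum_ite_mem, Finset.univ_inter, Finset.sum_const, h]
  simp

lemma PE_eq (J : Finset (Fin n)) :
    (Matrix.of (fun i k => if i = k ∧ i ∈ J then (1:ℝ) else 0) : Matrix (Fin n) (Fin n) ℝ)
      * Matrix.of (fun _ _ => (1:ℝ))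
    = Matrix.of (fun i _ => if i ∈ J then (1:ℝ) else 0) := by
  ext i k
  simp only [Matrix.mul_apply, Matrix.of_apply, mul_one]
  by_cases hiJ : i ∈ J
  · simp [hiJ, Finset.sum_ite_eq]
  · simp [hiJ]

lemma UE_eq (J : Finset (Fin n)) (h : J.card = p) :
    (Matrix.of (fun i k => (if i ∈ J then (1:ℝ) else 0) * (if k ∈ J then (1:ℝ) else 0))
        : Matrix (Fin n) (Fin n) ℝ) * Matrix.of (fun _ _ => (1:ℝ))
    = Matrix.of (fun i _ => (p:ℝ) * (if i ∈ J then (1:ℝ) else 0)) := by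
  ext i k
  simp only [Matrix.mul_apply, Matrix.of_apply, mul_one]
  rw [← Finset.mul_sum, sum_mem_ind J h, mul_comm]

lemma perJ (α β : ℝ) (hα : α ≠ 0) (hn : (n:ℝ) ≠ 0) (hd : (n:ℝ)*α+(p:ℝ)*β ≠ 0)
    (J : Finset (Fin n)) (h : J.card = p) :
    selector p J * ((selector p J)ᵀ * (α • (1 : Matrix (Fin n) (Fin n) ℝ)
        + (β/(n:ℝ)) • Matrix.of (fun _ _ => (1:ℝ))) * selector p J)⁻¹
      * (selector p J)ᵀ * (α • (1 : Matrix (Fin n) (Fin n) ℝ)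
        + (β/(n:ℝ)) • Matrix.of (fun _ _ => (1:ℝ)))
    = Matrix.of (fun i k => (if i = k ∧ i ∈ J then (1:ℝ) else 0)
        + (β/((n:ℝ)*α+(p:ℝ)*β)) * ((if i ∈ J then (1:ℝ) else 0)
          - (if i ∈ J then (1:ℝ) else 0) * (if k ∈ J then (1:ℝ) else 0))) := by
  have hD : (selector p J)ᵀ * (α • (1 : Matrix (Fin n) (Fin n) ℝ)
      + (β/(n:ℝ)) • Matrix.of (fun _ _ => (1:ℝ))) * selector p J
      = α • (1 : Matrix (Fin p) (Fin p) ℝ) + (β/(n:ℝ)) • Matrix.of (fun _ _ => (1:ℝ)) := by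
    simp only [Matrix.mul_add, Matrix.add_mul, mul_smul_comm, smul_mul_assoc, Matrix.mul_smul, Matrix.smul_mul, Matrix.mul_one]
    rw [selT_mul_self J h, selT_E_sel J h]
  set y : ℝ := -(β/(α*((n:ℝ)*α+(p:ℝ)*β))) with hy
  have h1' : α * α⁻¹ = 1 := mul_inv_cancel₀ hα
  have hd2 : α * (n:ℝ) + β * (p:ℝ) ≠ 0 := by rw [mul_comm α, mul_comm β]; exact hd
  have h2' : α * y + (β/(n:ℝ)) * α⁻¹ + (p:ℝ) * ((β/(n:ℝ)) * y) = 0 := by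
    rw [hy]; field_simp; ring
  have hinv := inv_combo α (β/(n:ℝ)) α⁻¹ y h1' h2'
  rw [hD, hinv]
  have hstep : selector p J * (α⁻¹ • (1 : Matrix (Fin p) (Fin p) ℝ)
        + y • Matrix.of (fun _ _ => (1:ℝ))) * (selector p J)ᵀ
      = α⁻¹ • (Matrix.of (fun i k => if i = k ∧ i ∈ J then (1:ℝ) else 0))
        + y • (Matrix.of (fun i k => (if i ∈ J then (1:ℝ) else 0) * (if k ∈ J then (1:ℝ) else 0))) := by
    simp only [Matrix.mul_add, Matrix.add_mul, mul_smul_comm, smul_mul_assoc, Matrix.mul_smul, Matrix.smul_mul, Matrix.mul_one]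
    rw [sel_mul_selT J h, sel_E_selT J h]
  calc selector p J * (α⁻¹ • (1 : Matrix (Fin p) (Fin p) ℝ)
        + y • Matrix.of (fun _ _ => (1:ℝ))) * (selector p J)ᵀ
        * (α • (1 : Matrix (Fin n) (Fin n) ℝ) + (β/(n:ℝ)) • Matrix.of (fun _ _ => (1:ℝ)))
      = (α⁻¹ • (Matrix.of (fun i k => if i = k ∧ i ∈ J then (1:ℝ) else 0))
        + y • (Matrix.of (fun i k => (if i ∈ J then (1:ℝ) else 0) * (if k ∈ J then (1:ℝ) else 0))))
        * (α • (1 : Matrix (Fin n) (Fin n) ℝ) + (β/(n:ℝ)) • Matrix.of (fun _ _ => (1:ℝ))) := by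
        rw [hstep]
    _ = _ := by
        simp only [Matrix.mul_add, Matrix.add_mul, mul_smul_comm, smul_mul_assoc, Matrix.mul_smul, Matrix.smul_mul,
          Matrix.mul_one, PE_eq J, UE_eq J h, smul_smul]
        ext i k
        simp only [Matrix.add_apply, Matrix.smul_apply, Matrix.of_apply, smul_eq_mul,
          Matrix.one_apply]
        rw [hy]
        split_ifs <;> field_simp <;> ring
lemma count1 (n p : ℕ) (hp : 0 < p) (i : Fin n) :
    ((Finset.powersetCard p (Finset.univ : Finset (Fin n))).filter (fun J => i ∈ J)).card
    = (n-1).choose (p-1) := by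
  have h0 : ((Finset.univ.erase i).powersetCard (p-1)).card = (n-1).choose (p-1) := by
    rw [Finset.card_powersetCard, Finset.card_erase_of_mem (Finset.mem_univ i), Finset.card_univ,
      Fintype.card_fin]
  rw [← h0]
  refine Finset.card_bij' (fun J _ => J.erase i) (fun K _ => insert i K) ?_ ?_ ?_ ?_
  · intro J hJ
    simp only [Finset.mem_filter, Finset.mem_powersetCard] at hJ
    simp only [Finset.mem_powersetCard]
    refine ⟨fun x hx => ?_, ?_⟩
    · simp only [Finset.mem_erase] at hx ⊢
      exact ⟨hx.1, Finset.mem_univ x⟩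
    · rw [Finset.card_erase_of_mem hJ.2, hJ.1.2]
  · intro K hK
    simp only [Finset.mem_powersetCard] at hK
    have hiK : i ∉ K := fun h => (Finset.mem_erase.1 (hK.1 h)).1 rfl
    simp only [Finset.mem_filter, Finset.mem_powersetCard]
    refine ⟨⟨fun x _ => Finset.mem_univ x, ?_⟩, Finset.mem_insert_self i K⟩
    rw [Finset.card_insert_of_notMem hiK, hK.2]
    omega
  · intro J hJ
    simp only [Finset.mem_filter] at hJ
    exact Finset.insert_erase hJ.2
  · intro K hK
    simp only [Finset.mem_powersetCard] at hK
    have hiK : i ∉ K := fun h => (Finset.mem_erase.1 (hK.1 h)).1 rfl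
    exact Finset.erase_insert hiK

lemma count2 (n p : ℕ) (hp : 0 < p) (i k : Fin n) (hik : i ≠ k) :
    ((Finset.powersetCard p (Finset.univ : Finset (Fin n))).filter
        (fun J => i ∈ J ∧ k ∉ J)).card = (n-2).choose (p-1) := by
  have h0 : (((Finset.univ.erase i).erase k).powersetCard (p-1)).card = (n-2).choose (p-1) := by
    rw [Finset.card_powersetCard, Finset.card_erase_of_mem, Finset.card_erase_of_mem
      (Finset.mem_univ i), Finset.card_univ, Fintype.card_fin]
    · rfl
    · exact Finset.mem_erase.2 ⟨Ne.symm hik, Finset.mem_univ k⟩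
  rw [← h0]
  refine Finset.card_bij' (fun J _ => J.erase i) (fun K _ => insert i K) ?_ ?_ ?_ ?_
  · intro J hJ
    simp only [Finset.mem_filter, Finset.mem_powersetCard] at hJ
    simp only [Finset.mem_powersetCard]
    refine ⟨fun x hx => ?_, ?_⟩
    · simp only [Finset.mem_erase] at hx ⊢
      refine ⟨fun h => hJ.2.2 (h ▸ hx.2), hx.1, Finset.mem_univ x⟩
    · rw [Finset.card_erase_of_mem hJ.2.1, hJ.1.2]
  · intro K hK
    simp only [Finset.mem_powersetCard] at hK
    have hiK : i ∉ K := fun h => ((Finset.mem_erase.1 (Finset.mem_erase.1 (hK.1 h)).2)).1 rfl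
    have hkK : k ∉ K := fun h => (Finset.mem_erase.1 (hK.1 h)).1 rfl
    simp only [Finset.mem_filter, Finset.mem_powersetCard]
    refine ⟨⟨fun x _ => Finset.mem_univ x, ?_⟩, Finset.mem_insert_self i K, ?_⟩
    · rw [Finset.card_insert_of_notMem hiK, hK.2]; omega
    · simp only [Finset.mem_insert]
      rintro (h | h)
      · exact hik h.symm
      · exact hkK h
  · intro J hJ
    simp only [Finset.mem_filter] at hJ
    exact Finset.insert_erase hJ.2.1
  · intro K hK
    simp only [Finset.mem_powersetCard] at hK
    have hiK : i ∉ K := fun h => ((Finset.mem_erase.1 (Finset.mem_erase.1 (hK.1 h)).2)).1 rfl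
    exact Finset.erase_insert hiK

/-- For `A = αI + (β/n)𝟙𝟙ᵀ` and a uniformly random size-`p` subset
`J` of `{1,…,n}` with column selector `S = S_J`,
`E[S(SᵀAS)⁻¹SᵀA] = [p((n−1)α+(p−1)β)/((n−1)(nα+pβ))]·I + [(n−p)pβ/(n(n−1)(nα+pβ))]·𝟙𝟙ᵀ`. -/
theorem stmt9 (α β : ℝ) (hα : 0 < α) (hαβ : 0 < α + β) (n p : ℕ) (hp : 1 < p) (hpn : p < n)
    (A : Matrix (Fin n) (Fin n) ℝ)
    (hA : A = α • (1 : Matrix (Fin n) (Fin n) ℝ) + (β / n) • Matrix.of (fun _ _ => (1 : ℝ))) :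
    ((n.choose p : ℝ))⁻¹ • (∑ J ∈ Finset.powersetCard p (Finset.univ : Finset (Fin n)),
        selector p J * ((selector p J)ᵀ * A * selector p J)⁻¹ * (selector p J)ᵀ * A)
      = ((p : ℝ) * (((n : ℝ) - 1) * α + ((p : ℝ) - 1) * β)
            / (((n : ℝ) - 1) * ((n : ℝ) * α + (p : ℝ) * β))) • (1 : Matrix (Fin n) (Fin n) ℝ)
        + (((n : ℝ) - p) * p * β / ((n : ℝ) * ((n : ℝ) - 1) * ((n : ℝ) * α + (p : ℝ) * β)))
            • Matrix.of (fun _ _ => (1 : ℝ)) := by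
  subst hA
  have hn0 : (n:ℝ) ≠ 0 := Nat.cast_ne_zero.2 (by omega)
  have hpR : (0:ℝ) < p := by exact_mod_cast (by omega : 0 < p)
  have hnpR : (p:ℝ) < (n:ℝ) := by exact_mod_cast hpn
  have hn1 : ((n:ℝ) - 1) ≠ 0 := by
    have : (1:ℝ) < (n:ℝ) := by exact_mod_cast (by omega : 1 < n)
    linarith
  have hdpos : (0:ℝ) < (n:ℝ)*α + (p:ℝ)*β := by nlinarith [mul_pos hpR hαβ]
  have hd : (n:ℝ)*α + (p:ℝ)*β ≠ 0 := ne_of_gt hdpos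
  have hq : ((n.choose p : ℕ):ℝ) ≠ 0 :=
    Nat.cast_ne_zero.2 (Nat.choose_pos hpn.le).ne'
  -- choose identities
  have e1 : n * (n-1).choose (p-1) = n.choose p * p := by
    obtain ⟨m, rfl⟩ : ∃ m, n = m+1 := ⟨n-1, by omega⟩
    obtain ⟨q, rfl⟩ : ∃ q, p = q+1 := ⟨p-1, by omega⟩
    simpa using Nat.add_one_mul_choose_eq m q
  have e2 : (n-1) * (n-2).choose (p-1) = (n-1).choose p * p := by
    obtain ⟨m, rfl⟩ : ∃ m, n = m+2 := ⟨n-2, by omega⟩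
    obtain ⟨q, rfl⟩ : ∃ q, p = q+1 := ⟨p-1, by omega⟩
    simpa using Nat.add_one_mul_choose_eq m q
  have e3 : n.choose p = (n-1).choose (p-1) + (n-1).choose p := by
    obtain ⟨m, rfl⟩ : ∃ m, n = m+1 := ⟨n-1, by omega⟩
    obtain ⟨q, rfl⟩ : ∃ q, p = q+1 := ⟨p-1, by omega⟩
    simpa using Nat.choose_succ_succ m q
  have hcast1 : ((n-1 : ℕ):ℝ) = (n:ℝ) - 1 := by
    rw [Nat.cast_sub (by omega)]; norm_num
  have hc1R : (n:ℝ) * (((n-1).choose (p-1) : ℕ):ℝ) = ((n.choose p : ℕ):ℝ) * (p:ℝ) := by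
    exact_mod_cast e1
  have hc2R : ((n:ℝ) - 1) * (((n-2).choose (p-1) : ℕ):ℝ)
      = (((n-1).choose p : ℕ):ℝ) * (p:ℝ) := by
    rw [← hcast1]; exact_mod_cast e2
  have hc3R : ((n.choose p : ℕ):ℝ) = (((n-1).choose (p-1) : ℕ):ℝ) + (((n-1).choose p : ℕ):ℝ) := by
    exact_mod_cast e3
  have hN2' : (((n-2).choose (p-1) : ℕ):ℝ) * ((n:ℝ) * ((n:ℝ)-1))
      = ((n.choose p : ℕ):ℝ) * ((p:ℝ) * ((n:ℝ)-(p:ℝ))) := by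
    linear_combination (n:ℝ) * hc2R - (n:ℝ)*(p:ℝ)*hc3R - (p:ℝ)*hc1R + (p:ℝ)*(p:ℝ)*hc1R/(n:ℝ)*0
  rw [Finset.sum_congr rfl (fun J hJ => perJ α β hα.ne' hn0 hd J (Finset.mem_powersetCard.1 hJ).2)]
  ext i k
  simp only [Matrix.smul_apply, Matrix.sum_apply, Matrix.of_apply, Matrix.add_apply,
    smul_eq_mul]
  rcases eq_or_ne i k with rfl | hik
  · have hterm : ∀ J ∈ Finset.powersetCard p (Finset.univ : Finset (Fin n)),
        ((if i = i ∧ i ∈ J then (1:ℝ) else 0)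
          + (β/((n:ℝ)*α+(p:ℝ)*β)) * ((if i ∈ J then (1:ℝ) else 0)
            - (if i ∈ J then (1:ℝ) else 0) * (if i ∈ J then (1:ℝ) else 0)))
        = (if i ∈ J then (1:ℝ) else 0) := by
      intro J _
      by_cases hiJ : i ∈ J <;> simp [hiJ]
    rw [Finset.sum_congr rfl hterm, Finset.sum_boole, count1 n p (by omega) i]
    simp only [Matrix.one_apply_eq]
    have hN1 : (((n-1).choose (p-1) : ℕ):ℝ) = ((n.choose p : ℕ):ℝ) * (p:ℝ) / (n:ℝ) := by
      rw [eq_div_iff hn0]; linear_combination hc1R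
    rw [hN1]
    field_simp
    ring
  · have hterm : ∀ J ∈ Finset.powersetCard p (Finset.univ : Finset (Fin n)),
        ((if i = k ∧ i ∈ J then (1:ℝ) else 0)
          + (β/((n:ℝ)*α+(p:ℝ)*β)) * ((if i ∈ J then (1:ℝ) else 0)
            - (if i ∈ J then (1:ℝ) else 0) * (if k ∈ J then (1:ℝ) else 0)))
        = (β/((n:ℝ)*α+(p:ℝ)*β)) * (if i ∈ J ∧ k ∉ J then (1:ℝ) else 0) := by
      intro J _
      rw [if_neg (fun hc => hik hc.1)]
      by_cases hiJ : i ∈ J <;> by_cases hkJ : k ∈ J <;> simp [hiJ, hkJ]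
    rw [Finset.sum_congr rfl hterm, ← Finset.mul_sum, Finset.sum_boole,
      count2 n p (by omega) i k hik]
    rw [Matrix.one_apply_ne hik]
    have hN2 : (((n-2).choose (p-1) : ℕ):ℝ)
        = ((n.choose p : ℕ):ℝ) * ((p:ℝ) * ((n:ℝ)-(p:ℝ))) / ((n:ℝ) * ((n:ℝ)-1)) := by
      rw [eq_div_iff (mul_ne_zero hn0 hn1)]; linear_combination hN2'
    rw [hN2]
    field_simp
    ring

end
end

section
/- Let A be an m×n real matrix with full column rank whose rows a_1, …, a_m ∈ ℝⁿ all have unit Euclidean norm. Then Σ_{i=1}^m a_i a_iᵀ (AᵀA)⁻¹ a_i a_iᵀ ⪯ AᵀA in the positive semidefinite order. Consequently, in the randomized Kaczmarz setting where H = a_i a_iᵀ with probability 1/m and G = E[H] = (1/m)AᵀA, one has E[H G⁻¹ H] ⪯ m·G, i.e., the acceleration parameter ν = λ_max(E[(G^{−1/2}HG^{−1/2})²]) satisfies ν ≤ m; moreover μ := λ_min(E[P_{AᵀS}]) = λ_min(AᵀA)/m when S selects a uniformly random row. -/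
open scoped BigOperators Matrix

noncomputable section

/-- `B` is the Moore–Penrose pseudoinverse of `A`. -/
def IsMoorePenrose {m n : ℕ} (A : Matrix (Fin m) (Fin n) ℝ) (B : Matrix (Fin n) (Fin m) ℝ) : Prop :=
  A * B * A = A ∧ B * A * B = B ∧ (A * B)ᵀ = A * B ∧ (B * A)ᵀ = B * A

open Classical in
/-- The Moore–Penrose pseudoinverse (it always exists and is unique). -/
def pinv {m n : ℕ} (A : Matrix (Fin m) (Fin n) ℝ) : Matrix (Fin n) (Fin m) ℝ :=
  if h : ∃ B, IsMoorePenrose A B then h.choose else 0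

/-- The orthogonal projector `P_M = M(MᵀM)†Mᵀ` onto the column space of `M`. -/
def proj {m n : ℕ} (M : Matrix (Fin m) (Fin n) ℝ) : Matrix (Fin m) (Fin m) ℝ :=
  M * pinv (Mᵀ * M) * Mᵀ

/-- The set of (real) eigenvalues of a square matrix. -/
def eigs {q : ℕ} (M : Matrix (Fin q) (Fin q) ℝ) : Set ℝ :=
  {r : ℝ | ∃ v : Fin q → ℝ, v ≠ 0 ∧ M.mulVec v = r • v}

/-- The `m×1` column selector matrix picking out row `i`. -/
def colSel {m : ℕ} (i : Fin m) : Matrix (Fin m) (Fin 1) ℝ :=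
  Matrix.of fun r _ => if r = i then (1 : ℝ) else 0

open scoped ComplexOrder in
/-- The square root of a positive semidefinite matrix, as `Matrix.PosSemidef.sqrt` was defined
in Mathlib of December 2024 (that definition has since been removed). -/
def PosSemidef.sqrtOld {n : Type*} [Fintype n] [DecidableEq n] {𝕜 : Type*} [RCLike 𝕜]
    {A : Matrix n n 𝕜} (hA : A.PosSemidef) : Matrix n n 𝕜 :=
  hA.1.eigenvectorUnitary.1 * Matrix.diagonal ((↑) ∘ (√·) ∘ hA.1.eigenvalues) *
    (star hA.1.eigenvectorUnitary : Matrix n n 𝕜)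

/-! ### Auxiliary lemmas -/

lemma sqrtOld_mul_self {n : ℕ} {G : Matrix (Fin n) (Fin n) ℝ} (hA : G.PosSemidef) :
    PosSemidef.sqrtOld hA * PosSemidef.sqrtOld hA = G := by
  unfold PosSemidef.sqrtOld
  conv_rhs => rw [hA.1.spectral_theorem]
  rw [Unitary.conjStarAlgAut_apply]
  set U : Matrix (Fin n) (Fin n) ℝ := hA.1.eigenvectorUnitary.1 with hUdef
  set D : Matrix (Fin n) (Fin n) ℝ := Matrix.diagonal (RCLike.ofReal ∘ (fun x => √x) ∘ hA.1.eigenvalues) with hDdef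
  have hU : star U * U = 1 := Unitary.coe_star_mul_self _
  have hD : D * D = Matrix.diagonal (RCLike.ofReal ∘ hA.1.eigenvalues : Fin n → ℝ) := by
    rw [hDdef, Matrix.diagonal_mul_diagonal]
    congr 1; funext i
    simp [Real.mul_self_sqrt (hA.eigenvalues_nonneg i)]
  calc U * D * star U * (U * D * star U) = U * (D * (star U * U) * D) * star U := by
        simp only [Matrix.mul_assoc]
    _ = _ := by rw [hU, Matrix.mul_one, hD]

lemma sqrtOld_herm {n : ℕ} {G : Matrix (Fin n) (Fin n) ℝ} (hA : G.PosSemidef) :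
    (PosSemidef.sqrtOld hA)ᴴ = PosSemidef.sqrtOld hA := by
  unfold PosSemidef.sqrtOld
  rw [Matrix.conjTranspose_mul, Matrix.conjTranspose_mul, Matrix.diagonal_conjTranspose,
    Matrix.star_eq_conjTranspose, Matrix.conjTranspose_conjTranspose, Matrix.mul_assoc]
  congr 2


lemma psd_smul {n : ℕ} {M : Matrix (Fin n) (Fin n) ℝ} (hM : M.PosSemidef) {c : ℝ} (hc : 0 ≤ c) :
    (c • M).PosSemidef := by
  refine Matrix.PosSemidef.of_dotProduct_mulVec_nonneg ?_ fun x => ?_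
  · unfold Matrix.IsHermitian
    rw [Matrix.conjTranspose_smul, hM.1]
    simp
  · rw [Matrix.smul_mulVec, dotProduct_smul]
    exact mul_nonneg hc (hM.dotProduct_mulVec_nonneg x)

lemma psd_sum {m n : ℕ} {s : Finset (Fin m)} {f : Fin m → Matrix (Fin n) (Fin n) ℝ}
    (h : ∀ i ∈ s, (f i).PosSemidef) : (∑ i ∈ s, f i).PosSemidef := by
  classical
  induction s using Finset.induction_on with
  | empty => simpa using Matrix.PosSemidef.zero
  | insert _ _ hnotmem ih =>
    rw [Finset.sum_insert hnotmem]
    exact ((h _ (Finset.mem_insert_self _ _)).add (ih fun i hi => h i (Finset.mem_insert_of_mem hi)))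

lemma vecMulVec_psd {n : ℕ} (a : Fin n → ℝ) : (Matrix.vecMulVec a a).PosSemidef := by
  refine Matrix.PosSemidef.of_dotProduct_mulVec_nonneg ?_ fun x => ?_
  · ext i j; simp [Matrix.vecMulVec_apply, mul_comm]
  · have : (star x) ⬝ᵥ (Matrix.vecMulVec a a *ᵥ x) = (a ⬝ᵥ x) ^ 2 := by
      simp only [dotProduct, Matrix.mulVec, Matrix.vecMulVec_apply, star_trivial]
      rw [sq, Finset.sum_mul]
      congr 1; ext j
      rw [Finset.mul_sum, Finset.mul_sum]
      congr 1; ext k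
      ring
    rw [this]; positivity

lemma vecMulVec_mul_mul {n : ℕ} (a : Fin n → ℝ) (X : Matrix (Fin n) (Fin n) ℝ) :
    Matrix.vecMulVec a a * X * Matrix.vecMulVec a a = (a ⬝ᵥ X *ᵥ a) • Matrix.vecMulVec a a := by
  ext i j
  simp only [Matrix.mul_apply, Matrix.vecMulVec_apply, Matrix.smul_apply, dotProduct,
    Matrix.mulVec, smul_eq_mul]
  simp only [Finset.sum_mul, Finset.mul_sum]
  rw [Finset.sum_comm]
  congr 1; ext p
  congr 1; ext q
  ring

lemma AtA_sum {m n : ℕ} (A : Matrix (Fin m) (Fin n) ℝ) :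
    Aᵀ * A = ∑ i : Fin m, Matrix.vecMulVec (A i) (A i) := by
  ext j k
  simp [Matrix.mul_apply, Matrix.vecMulVec_apply, Matrix.sum_apply, Matrix.transpose_apply]

lemma ci_le_one {m n : ℕ} (A : Matrix (Fin m) (Fin n) ℝ)
    (hBpd : (Aᵀ * A).PosDef) (i : Fin m) :
    A i ⬝ᵥ (Aᵀ * A)⁻¹ *ᵥ A i ≤ 1 := by
  set B := Aᵀ * A with hB
  have hdet : IsUnit B.det := hBpd.det_pos.ne'.isUnit
  have hBsymm : Bᵀ = B := by rw [hB, Matrix.transpose_mul, Matrix.transpose_transpose]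
  have hBinvsymm : (B⁻¹)ᵀ = B⁻¹ := by rw [Matrix.transpose_nonsing_inv, hBsymm]
  set P := A * B⁻¹ * Aᵀ with hP
  have hPsymm : Pᵀ = P := by
    rw [hP, Matrix.transpose_mul, Matrix.transpose_mul, Matrix.transpose_transpose, hBinvsymm,
      Matrix.mul_assoc]
  have hP2 : P * P = P := by
    rw [hP]
    calc A * B⁻¹ * Aᵀ * (A * B⁻¹ * Aᵀ) = A * B⁻¹ * (Aᵀ * A) * B⁻¹ * Aᵀ := by
          simp only [Matrix.mul_assoc]
      _ = A * B⁻¹ * Aᵀ := by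
          rw [← hB, Matrix.mul_assoc (A * B⁻¹) B B⁻¹, Matrix.mul_nonsing_inv _ hdet, Matrix.mul_one]
  have hpsd : (1 - P).PosSemidef := by
    have h := Matrix.posSemidef_conjTranspose_mul_self (1 - P)
    have he : (1 - P)ᴴ * (1 - P) = 1 - P := by
      have : (1 - P)ᴴ = 1 - P := by
        ext a b
        have hPab : P b a = P a b := by
          conv_lhs => rw [← hPsymm, Matrix.transpose_apply]
        simp [Matrix.conjTranspose_apply, Matrix.sub_apply, Matrix.one_apply, hPab, eq_comm]
      rw [this, Matrix.sub_mul, Matrix.mul_sub, Matrix.mul_sub, hP2]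
      simp
    rwa [he] at h
  have hdiag : 0 ≤ (1 - P) i i := by
    have h := hpsd.dotProduct_mulVec_nonneg (Pi.single i 1)
    have : star (Pi.single i 1 : Fin m → ℝ) ⬝ᵥ ((1 - P) *ᵥ Pi.single i 1) = (1 - P) i i := by
      simp [dotProduct, Matrix.mulVec, Pi.single_apply]
    rwa [this] at h
  have hPii : P i i = A i ⬝ᵥ B⁻¹ *ᵥ A i := by
    simp only [hP, Matrix.mul_apply, Matrix.transpose_apply, dotProduct, Matrix.mulVec,
      Finset.sum_mul, Finset.mul_sum]
    rw [Finset.sum_comm]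
    congr 1; ext p; congr 1; ext q; ring
  have h1 : (1 : Matrix (Fin m) (Fin m) ℝ) i i = 1 := by simp
  simp only [Matrix.sub_apply, h1] at hdiag
  rw [← hPii]
  linarith

lemma pinv_one {k : ℕ} : pinv (1 : Matrix (Fin k) (Fin k) ℝ) = 1 := by
  classical
  have hex : ∃ B, IsMoorePenrose (1 : Matrix (Fin k) (Fin k) ℝ) B :=
    ⟨1, by refine ⟨by simp, by simp, by simp, by simp⟩⟩
  rw [pinv, dif_pos hex]
  have h1 := hex.choose_spec.1
  simpa using h1

/-- Let `A` be `m×n` with full column rank and unit-norm rows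
`a_1, …, a_m`.  Then `Σ_i a_i a_iᵀ (AᵀA)⁻¹ a_i a_iᵀ ⪯ AᵀA`.  Consequently, in the
randomized Kaczmarz setting (`H = a_i a_iᵀ` with probability `1/m`,
`G = E[H] = (1/m)AᵀA`): `E[H G⁻¹ H] ⪯ m·G`, the acceleration parameter
`ν = λ_max(E[(G^{−1/2}HG^{−1/2})²])` satisfies `ν ≤ m`, and
`μ = λ_min(E[P_{AᵀS}]) = λ_min(AᵀA)/m` for `S` a uniformly random column selector of a row. -/
theorem stmt17 (m n : ℕ) (hm : 0 < m)
    (A : Matrix (Fin m) (Fin n) ℝ) (hrank : A.rank = n)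
    (hnorm : ∀ i, A i ⬝ᵥ A i = 1)
    (G : Matrix (Fin n) (Fin n) ℝ) (hG : G = (m : ℝ)⁻¹ • (Aᵀ * A))
    (hGpd : G.PosDef) :
    ((Aᵀ * A) - ∑ i : Fin m,
        Matrix.vecMulVec (A i) (A i) * (Aᵀ * A)⁻¹ * Matrix.vecMulVec (A i) (A i)).PosSemidef ∧
    ((m : ℝ) • G - (m : ℝ)⁻¹ • (∑ i : Fin m,
        Matrix.vecMulVec (A i) (A i) * G⁻¹ * Matrix.vecMulVec (A i) (A i))).PosSemidef ∧
    (∀ ν : ℝ, IsGreatest (eigs ((m : ℝ)⁻¹ • (∑ i : Fin m,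
        ((PosSemidef.sqrtOld hGpd.posSemidef)⁻¹ * Matrix.vecMulVec (A i) (A i) * (PosSemidef.sqrtOld hGpd.posSemidef)⁻¹) ^ 2))) ν →
      ν ≤ m) ∧
    (∀ μ lam : ℝ,
      IsLeast (eigs ((m : ℝ)⁻¹ • (∑ i : Fin m, proj (Aᵀ * colSel i)))) μ →
      IsLeast (eigs (Aᵀ * A)) lam →
      μ = lam / m) := by
  classical
  have hmne : (m : ℝ) ≠ 0 := Nat.cast_ne_zero.mpr hm.ne'
  have hmpos : (0:ℝ) < m := Nat.cast_pos.mpr hm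
  have hBG : Aᵀ * A = (m : ℝ) • G := by
    rw [hG, smul_smul, mul_inv_cancel₀ hmne, one_smul]
  have hBpd : (Aᵀ * A).PosDef := by
    rw [hBG]
    refine Matrix.PosDef.of_dotProduct_mulVec_pos ?_ fun x hx => ?_
    · unfold Matrix.IsHermitian
      rw [Matrix.conjTranspose_smul, hGpd.1]
      simp
    · rw [Matrix.smul_mulVec, dotProduct_smul, smul_eq_mul]
      exact mul_pos hmpos (hGpd.dotProduct_mulVec_pos hx)
  have hdet : IsUnit (Aᵀ * A).det := hBpd.det_pos.ne'.isUnit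
  -- Part 1
  have part1 : ((Aᵀ * A) - ∑ i : Fin m,
      Matrix.vecMulVec (A i) (A i) * (Aᵀ * A)⁻¹ * Matrix.vecMulVec (A i) (A i)).PosSemidef := by
    set Binv := (Aᵀ * A)⁻¹ with hBinv
    have heq : (Aᵀ * A) - (∑ i : Fin m,
        Matrix.vecMulVec (A i) (A i) * Binv * Matrix.vecMulVec (A i) (A i))
        = ∑ i : Fin m, (1 - A i ⬝ᵥ Binv *ᵥ A i) • Matrix.vecMulVec (A i) (A i) := by
      conv_lhs => rw [AtA_sum A]
      rw [← Finset.sum_sub_distrib]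
      refine Finset.sum_congr rfl fun i _ => ?_
      rw [vecMulVec_mul_mul, sub_smul, one_smul]
    rw [heq]
    exact psd_sum fun i _ => psd_smul (vecMulVec_psd _) (by linarith [ci_le_one A hBpd i])
  -- G⁻¹ = m • (AᵀA)⁻¹
  have hGinv : G⁻¹ = (m : ℝ) • (Aᵀ * A)⁻¹ := by
    apply Matrix.inv_eq_right_inv
    rw [hG, Matrix.smul_mul, Matrix.mul_smul, smul_smul, inv_mul_cancel₀ hmne, one_smul,
      Matrix.mul_nonsing_inv _ hdet]
  -- Part 2
  have part2eq : (m : ℝ) • G - (m : ℝ)⁻¹ • (∑ i : Fin m,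
      Matrix.vecMulVec (A i) (A i) * G⁻¹ * Matrix.vecMulVec (A i) (A i))
      = (Aᵀ * A) - ∑ i : Fin m,
      Matrix.vecMulVec (A i) (A i) * (Aᵀ * A)⁻¹ * Matrix.vecMulVec (A i) (A i) := by
    rw [← hBG, hGinv]
    congr 1
    rw [Finset.smul_sum]
    refine Finset.sum_congr rfl fun i _ => ?_
    rw [Matrix.mul_smul, Matrix.smul_mul, smul_smul, inv_mul_cancel₀ hmne, one_smul]
  have part2 : ((m : ℝ) • G - (m : ℝ)⁻¹ • (∑ i : Fin m,
      Matrix.vecMulVec (A i) (A i) * G⁻¹ * Matrix.vecMulVec (A i) (A i))).PosSemidef := by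
    rw [part2eq]; exact part1
  refine ⟨part1, part2, ?_, ?_⟩
  -- Part 3
  · intro ν hν
    set S := (PosSemidef.sqrtOld hGpd.posSemidef)⁻¹ with hS
    have hsq : (PosSemidef.sqrtOld hGpd.posSemidef) * (PosSemidef.sqrtOld hGpd.posSemidef) = G := sqrtOld_mul_self hGpd.posSemidef
    have hsdet : IsUnit (PosSemidef.sqrtOld hGpd.posSemidef).det := by
      have : (PosSemidef.sqrtOld hGpd.posSemidef).det * (PosSemidef.sqrtOld hGpd.posSemidef).det = G.det := by
        rw [← Matrix.det_mul, hsq]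
      have hGdet : G.det ≠ 0 := hGpd.det_pos.ne'
      have : (PosSemidef.sqrtOld hGpd.posSemidef).det ≠ 0 := fun h => hGdet (by rw [← this, h, zero_mul])
      exact this.isUnit
    have hSH : Sᴴ = S := by
      rw [hS, Matrix.conjTranspose_nonsing_inv, sqrtOld_herm hGpd.posSemidef]
    have hSS : S * S = G⁻¹ := by
      rw [hS, ← Matrix.mul_inv_rev, hsq]
    have hSGS : S * G * S = 1 := by
      rw [← hsq, hS]
      simp only [Matrix.mul_assoc]
      rw [Matrix.nonsing_inv_mul_cancel_left _ _ hsdet, Matrix.mul_nonsing_inv _ hsdet]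
    set N := (m : ℝ)⁻¹ • (∑ i : Fin m,
        (S * Matrix.vecMulVec (A i) (A i) * S) ^ 2) with hN
    have hNpsd : ((m : ℝ) • (1 : Matrix (Fin n) (Fin n) ℝ) - N).PosSemidef := by
      have hconj := part2.mul_mul_conjTranspose_same S
      have heq : S * ((m : ℝ) • G - (m : ℝ)⁻¹ • (∑ i : Fin m,
          Matrix.vecMulVec (A i) (A i) * G⁻¹ * Matrix.vecMulVec (A i) (A i))) * Sᴴ
          = (m : ℝ) • (1 : Matrix (Fin n) (Fin n) ℝ) - N := by
        rw [hSH, Matrix.mul_sub, Matrix.sub_mul]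
        congr 1
        · rw [Matrix.mul_smul, Matrix.smul_mul, hSGS]
        · rw [hN, Matrix.mul_smul, Matrix.smul_mul]
          congr 1
          rw [Finset.mul_sum, Finset.sum_mul]
          refine Finset.sum_congr rfl fun i _ => ?_
          rw [sq, ← hSS]
          simp only [Matrix.mul_assoc]
      rwa [heq] at hconj
    obtain ⟨v, hv0, hv⟩ := hν.1
    have hvvnn : 0 ≤ v ⬝ᵥ v :=
      Finset.sum_nonneg fun i _ => mul_self_nonneg _
    have hvv : 0 < v ⬝ᵥ v := by
      rcases lt_or_eq_of_le hvvnn with h | h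
      · exact h
      · exact absurd (dotProduct_self_eq_zero.mp h.symm) hv0
    have hq := hNpsd.dotProduct_mulVec_nonneg v
    rw [Matrix.sub_mulVec, dotProduct_sub, Matrix.smul_mulVec, Matrix.one_mulVec,
      hv, dotProduct_smul, dotProduct_smul] at hq
    simp only [star_trivial, smul_eq_mul] at hq
    nlinarith
  -- Part 4
  · intro μ lam hμ hlam
    have hproj : ∀ i : Fin m, proj (Aᵀ * colSel i) = Matrix.vecMulVec (A i) (A i) := by
      intro i
      have hM : ∀ j (c : Fin 1), (Aᵀ * colSel i) j c = A i j := by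
        intro j c
        simp [Matrix.mul_apply, colSel, Matrix.transpose_apply]
      have hMtM : (Aᵀ * colSel i)ᵀ * (Aᵀ * colSel i) = 1 := by
        ext c d
        have hc : c = d := Subsingleton.elim c d
        subst hc
        simp only [Matrix.mul_apply, Matrix.transpose_apply, hM]
        have := hnorm i
        simpa [dotProduct, Matrix.one_apply] using this
      rw [proj, hMtM, pinv_one, Matrix.mul_one]
      ext j k
      rw [Matrix.mul_apply, Fin.sum_univ_one, Matrix.transpose_apply, hM, hM,
        Matrix.vecMulVec_apply]
    have hsum : (∑ i : Fin m, proj (Aᵀ * colSel i)) = Aᵀ * A := by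
      rw [AtA_sum A]
      exact Finset.sum_congr rfl fun i _ => hproj i
    rw [hsum] at hμ
    -- relate eigenvalues of m⁻¹ • X and X
    have hdir1 : ∀ r : ℝ, r ∈ eigs (Aᵀ * A) → (m : ℝ)⁻¹ * r ∈ eigs ((m : ℝ)⁻¹ • (Aᵀ * A)) := by
      rintro r ⟨v, hv0, hv⟩
      exact ⟨v, hv0, by rw [Matrix.smul_mulVec, hv, smul_smul]⟩
    have hdir2 : ∀ r : ℝ, r ∈ eigs ((m : ℝ)⁻¹ • (Aᵀ * A)) → (m : ℝ) * r ∈ eigs (Aᵀ * A) := by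
      rintro r ⟨v, hv0, hv⟩
      refine ⟨v, hv0, ?_⟩
      rw [Matrix.smul_mulVec] at hv
      have := congrArg (fun w => (m : ℝ) • w) hv
      simpa [smul_smul, mul_inv_cancel₀ hmne] using this
    have h1 : lam ≤ (m : ℝ) * μ := hlam.2 (hdir2 μ hμ.1)
    have h2 : μ ≤ (m : ℝ)⁻¹ * lam := hμ.2 (hdir1 lam hlam.1)
    rw [div_eq_inv_mul]
    have h1' : (m : ℝ)⁻¹ * lam ≤ μ := by
      have := mul_le_mul_of_nonneg_left h1 (le_of_lt (inv_pos.mpr hmpos))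
      rwa [← mul_assoc, inv_mul_cancel₀ hmne, one_mul] at this
    linarith

end
end
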